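/- Fix n ≥ 1 and k ≥ 1, and let p, q be non-commutative polynomials in k variables with natural number coefficients. Then there exist x_1, …, x_k ∈ ℕ with p(x_1,…,x_k) = q(x_1,…,x_k) if and only if there exist matrices Y, A_1, …, A_{n−1}, X_1, …, X_k ∈ M_n(ℕ) satisfying the system: Y + A_1·Y·A_1 + ⋯ + A_{n−1}·Y·A_{n−1} = I_n, A_1²·A_2²·⋯·A_{n−1}² = I_n, X_j·Y = Y·X_j for all 1 ≤ j ≤ k, and p(X_1,…,X_k) = q(X_1,…,X_k). -/

import Mathlib

open Matrix Finset

variable {n : ℕ}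

/-- one-sided inverses of ℕ-matrices are two-sided -/
lemma natmat_mul_eq_one_comm {A B : Matrix (Fin n) (Fin n) ℕ} (h : A * B = 1) : B * A = 1 := by
  have hinj : Function.Injective ((Nat.castRingHom ℤ).mapMatrix :
      Matrix (Fin n) (Fin n) ℕ →+* Matrix (Fin n) (Fin n) ℤ) := by
    intro M N hMN
    ext i j
    have := congrFun (congrFun (congrArg (Matrix.of.symm) hMN) i) j
    simpa [RingHom.mapMatrix, Matrix.map] using this
  apply hinj
  have h' := congrArg ((Nat.castRingHom ℤ).mapMatrix) h
  rw [_root_.map_mul, _root_.map_one] at h'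
  rw [_root_.map_mul, _root_.map_one]
  exact mul_eq_one_comm.mp h'

/-- In M_n(ℕ), if a product of a list is a unit, every member is a unit. -/
lemma natmat_isUnit_of_prod_isUnit :
    ∀ (l : List (Matrix (Fin n) (Fin n) ℕ)), IsUnit l.prod →
      ∀ x ∈ l, IsUnit x := by
  intro l
  induction l with
  | nil => intro _ x hx; simp at hx
  | cons a t ih =>
    intro hprod x hx
    rw [List.prod_cons] at hprod
    obtain ⟨b, hb⟩ := hprod.exists_right_inv
    have h1 : a * (t.prod * b) = 1 := by rw [← mul_assoc]; exact hb
    have ha : IsUnit a := ⟨⟨a, t.prod * b, h1, natmat_mul_eq_one_comm h1⟩, rfl⟩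
    have ht : IsUnit t.prod := by
      have h2 := natmat_mul_eq_one_comm h1
      have h3 : t.prod * (b * a) = 1 := by rw [← mul_assoc]; exact h2
      exact ⟨⟨t.prod, b * a, h3, natmat_mul_eq_one_comm h3⟩, rfl⟩
    rcases List.mem_cons.mp hx with rfl | hxt
    · exact ha
    · exact ih ht x hxt


def eS (M : Matrix (Fin n) (Fin n) ℕ) : ℕ := ∑ i, ∑ j, M i j

lemma eS_mul (M N : Matrix (Fin n) (Fin n) ℕ) :
    eS (M * N) = ∑ k, (∑ i, M i k) * (∑ j, N k j) := by
  unfold eS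
  simp only [Matrix.mul_apply]
  calc ∑ i, ∑ j, ∑ k, M i k * N k j
      = ∑ i, ∑ k, M i k * ∑ j, N k j := by
        refine Finset.sum_congr rfl fun i _ => ?_
        rw [Finset.sum_comm]
        simp_rw [Finset.mul_sum]
    _ = ∑ k, (∑ i, M i k) * ∑ j, N k j := by
        rw [Finset.sum_comm]
        simp_rw [Finset.sum_mul]

lemma eS_one (hn : 1 ≤ n) : eS (1 : Matrix (Fin n) (Fin n) ℕ) = n := by
  unfold eS
  simp [Matrix.one_apply]

example : True := trivial

lemma each_eq_one {f : Fin n → ℕ} (hf : ∀ k, 1 ≤ f k) (h : ∑ k, f k = n) :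
    ∀ k, f k = 1 := by
  by_contra hc
  push_neg at hc
  obtain ⟨a, ha⟩ := hc
  have h2 : 2 ≤ f a := lt_of_le_of_ne (hf a) (Ne.symm ha)
  have : (∑ _k : Fin n, 1) < ∑ k, f k :=
    Finset.sum_lt_sum (fun i _ => hf i) ⟨a, Finset.mem_univ a, h2⟩
  simp [h] at this

lemma unit_sums {A B : Matrix (Fin n) (Fin n) ℕ} (hAB : A * B = 1) (hBA : B * A = 1) :
    (∀ k, ∑ i, A i k = 1) ∧ (∀ k, ∑ j, A k j = 1) := by
  -- positivity of columns of A
  have hcA : ∀ k, 1 ≤ ∑ i, A i k := by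
    intro k
    have h1 : (B * A) k k = 1 := by rw [hBA]; simp [Matrix.one_apply]
    rw [Matrix.mul_apply] at h1
    obtain ⟨m, _, hm⟩ := Finset.exists_ne_zero_of_sum_ne_zero (by omega : ∑ m, B k m * A m k ≠ 0)
    have : A m k ≠ 0 := fun h0 => hm (by simp [h0])
    calc 1 ≤ A m k := Nat.one_le_iff_ne_zero.mpr this
      _ ≤ ∑ i, A i k := Finset.single_le_sum (f := fun i => A i k) (fun i _ => Nat.zero_le _) (Finset.mem_univ m)
  have hrA : ∀ k, 1 ≤ ∑ j, A k j := by
    intro k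
    have h1 : (A * B) k k = 1 := by rw [hAB]; simp [Matrix.one_apply]
    rw [Matrix.mul_apply] at h1
    obtain ⟨m, _, hm⟩ := Finset.exists_ne_zero_of_sum_ne_zero (by omega : ∑ m, A k m * B m k ≠ 0)
    have : A k m ≠ 0 := fun h0 => hm (by simp [h0])
    calc 1 ≤ A k m := Nat.one_le_iff_ne_zero.mpr this
      _ ≤ ∑ j, A k j := Finset.single_le_sum (f := fun j => A k j) (fun i _ => Nat.zero_le _) (Finset.mem_univ m)
  have hrB : ∀ k, 1 ≤ ∑ j, B k j := by
    intro k
    have h1 : (B * A) k k = 1 := by rw [hBA]; simp [Matrix.one_apply]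
    rw [Matrix.mul_apply] at h1
    obtain ⟨m, _, hm⟩ := Finset.exists_ne_zero_of_sum_ne_zero (by omega : ∑ m, B k m * A m k ≠ 0)
    have : B k m ≠ 0 := fun h0 => hm (by simp [h0])
    calc 1 ≤ B k m := Nat.one_le_iff_ne_zero.mpr this
      _ ≤ ∑ j, B k j := Finset.single_le_sum (f := fun j => B k j) (fun i _ => Nat.zero_le _) (Finset.mem_univ m)
  have hcB : ∀ k, 1 ≤ ∑ i, B i k := by
    intro k
    have h1 : (A * B) k k = 1 := by rw [hAB]; simp [Matrix.one_apply]
    rw [Matrix.mul_apply] at h1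
    obtain ⟨m, _, hm⟩ := Finset.exists_ne_zero_of_sum_ne_zero (by omega : ∑ m, A k m * B m k ≠ 0)
    have : B m k ≠ 0 := fun h0 => hm (by simp [h0])
    calc 1 ≤ B m k := Nat.one_le_iff_ne_zero.mpr this
      _ ≤ ∑ i, B i k := Finset.single_le_sum (f := fun i => B i k) (fun i _ => Nat.zero_le _) (Finset.mem_univ m)
  have eS1 : eS (1 : Matrix (Fin n) (Fin n) ℕ) = n := by unfold eS; simp [Matrix.one_apply]
  constructor
  · intro k
    have hsum : ∑ k, (∑ i, A i k) * (∑ j, B k j) = n := by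
      rw [← eS_mul, hAB, eS1]
    have := each_eq_one (f := fun k => (∑ i, A i k) * (∑ j, B k j))
      (fun k => Nat.one_le_iff_ne_zero.mpr (Nat.mul_ne_zero
        (Nat.one_le_iff_ne_zero.mp (hcA k)) (Nat.one_le_iff_ne_zero.mp (hrB k)))) hsum k
    exact Nat.dvd_one.mp (Dvd.intro _ this)
  · intro k
    have hsum : ∑ k, (∑ i, B i k) * (∑ j, A k j) = n := by
      rw [← eS_mul, hBA, eS1]
    have := each_eq_one (f := fun k => (∑ i, B i k) * (∑ j, A k j))
      (fun k => Nat.one_le_iff_ne_zero.mpr (Nat.mul_ne_zero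
        (Nat.one_le_iff_ne_zero.mp (hcB k)) (Nat.one_le_iff_ne_zero.mp (hrA k)))) hsum k
    exact Nat.dvd_one.mp (Dvd.intro_left _ this)

lemma eS_sandwich {A B Y : Matrix (Fin n) (Fin n) ℕ} (hAB : A * B = 1) (hBA : B * A = 1) :
    eS (A * Y * A) = eS Y := by
  obtain ⟨hcol, hrow⟩ := unit_sums hAB hBA
  have h1 : eS (A * Y) = eS Y := by
    rw [eS_mul]
    simp only [hcol, one_mul]
    unfold eS
    rfl
  rw [eS_mul]
  simp only [hrow, mul_one]
  calc ∑ k, ∑ i, (A * Y) i k = eS (A * Y) := by unfold eS; rw [Finset.sum_comm]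
    _ = eS Y := h1

lemma eS_eq_one_exists {Y : Matrix (Fin n) (Fin n) ℕ} (h : eS Y = 1) :
    ∃ a b, Y a b = 1 ∧ ∀ i j, (i, j) ≠ (a, b) → Y i j = 0 := by
  unfold eS at h
  replace h : ∑ x : Fin n × Fin n, Y x.1 x.2 = 1 := (Fintype.sum_prod_type' (fun i j => Y i j)).trans h
  have h0 : ∑ x : Fin n × Fin n, Y x.1 x.2 ≠ 0 := by omega
  obtain ⟨⟨a, b⟩, _, hab⟩ := Finset.exists_ne_zero_of_sum_ne_zero h0
  have hab' : Y a b ≠ 0 := hab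
  have e1 := Finset.add_sum_erase Finset.univ (fun x : Fin n × Fin n => Y x.1 x.2)
    (Finset.mem_univ (a, b))
  rw [h] at e1
  have e1' : Y a b + ∑ x ∈ Finset.univ.erase ((a, b) : Fin n × Fin n), Y x.1 x.2 = 1 := e1
  refine ⟨a, b, by omega, ?_⟩
  intro i j hij
  have hmem : (i, j) ∈ Finset.univ.erase ((a, b) : Fin n × Fin n) :=
    Finset.mem_erase.mpr ⟨hij, Finset.mem_univ _⟩
  have h3 : Y i j ≤ ∑ x ∈ Finset.univ.erase ((a, b) : Fin n × Fin n), Y x.1 x.2 :=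
    Finset.single_le_sum (f := fun x : Fin n × Fin n => Y x.1 x.2)
      (fun i _ => Nat.zero_le _) hmem
  omega

lemma Y_std {Y : Matrix (Fin n) (Fin n) ℕ} {A : Fin (n - 1) → Matrix (Fin n) (Fin n) ℕ}
    (hn : 1 ≤ n)
    (hY : Y + ∑ j : Fin (n - 1), A j * Y * A j = 1)
    (hA : (List.ofFn fun j : Fin (n - 1) => (A j) ^ 2).prod = 1) :
    ∃ a, Y = Matrix.single a a 1 := by
  -- each A j is a unit-ish: two-sided invertible
  have hAunit : ∀ j, ∃ B, A j * B = 1 ∧ B * A j = 1 := by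
    intro j
    have hmem : (A j) ^ 2 ∈ List.ofFn (fun j : Fin (n - 1) => (A j) ^ 2) := by
      rw [List.mem_ofFn]; exact ⟨j, rfl⟩
    have hu : IsUnit ((A j) ^ 2) :=
      natmat_isUnit_of_prod_isUnit _ (hA ▸ isUnit_one) _ hmem
    obtain ⟨B, hB⟩ := hu.exists_right_inv
    have h1 : A j * (A j * B) = 1 := by
      rw [← mul_assoc, ← pow_two]; exact hB
    exact ⟨A j * B, h1, natmat_mul_eq_one_comm h1⟩
  -- entry sum of Y is 1
  have heS : eS Y = 1 := by
    have h := congrArg eS hY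
    have hexp : eS (Y + ∑ j : Fin (n - 1), A j * Y * A j)
        = eS Y + ∑ j : Fin (n - 1), eS (A j * Y * A j) := by
      unfold eS
      simp only [Matrix.add_apply, Matrix.sum_apply, Finset.sum_add_distrib]
      congr 1
      exact (Finset.sum_congr rfl fun i _ => Finset.sum_comm).trans Finset.sum_comm
    rw [hexp, eS_one hn] at h
    have hsand : ∀ j : Fin (n - 1), eS (A j * Y * A j) = eS Y := by
      intro j
      obtain ⟨B, hAB, hBA⟩ := hAunit j
      exact eS_sandwich hAB hBA
    simp only [hsand, Finset.sum_const, Finset.card_univ, Fintype.card_fin,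
      smul_eq_mul] at h
    have h2 : eS Y * n = 1 * n := by
      have : eS Y + (n - 1) * eS Y = eS Y * (1 + (n - 1)) := by ring
      rw [this, Nat.add_sub_cancel' hn] at h
      omega
    exact Nat.eq_of_mul_eq_mul_right (by omega) h2
  obtain ⟨a, b, hab1, hab0⟩ := eS_eq_one_exists heS
  -- a = b
  have hdiag : a = b := by
    by_contra hne
    have h := congrFun (congrFun hY a) b
    simp only [Matrix.add_apply, Matrix.sum_apply] at h
    rw [Matrix.one_apply_ne hne, hab1] at h
    omega
  subst hdiag
  refine ⟨a, ?_⟩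
  ext i j
  rw [Matrix.single]
  by_cases hij : a = i ∧ a = j
  · obtain ⟨rfl, rfl⟩ := hij
    simp [hab1]
  · have : (i, j) ≠ (a, a) := by
      simp only [ne_eq, Prod.mk.injEq]
      rintro ⟨rfl, rfl⟩
      exact hij ⟨rfl, rfl⟩
    rw [hab0 i j this]
    simp only [Matrix.of_apply, if_neg hij]

section Backward
variable {k : ℕ}

lemma backward_dir {Y : Matrix (Fin n) (Fin n) ℕ} {a : Fin n}
    (hYs : Y = Matrix.single a a 1)
    {X : Fin k → Matrix (Fin n) (Fin n) ℕ}
    (hcomm : ∀ j : Fin k, X j * Y = Y * X j)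
    {p q : FreeAlgebra ℕ (Fin k)}
    (hpq : FreeAlgebra.lift ℕ X p = FreeAlgebra.lift ℕ X q) :
    ∃ x : Fin k → ℕ, FreeAlgebra.lift ℕ x p = FreeAlgebra.lift ℕ x q := by
  subst hYs
  set C := Subalgebra.centralizer ℕ
    ({Matrix.single a a 1} : Set (Matrix (Fin n) (Fin n) ℕ)) with hC
  -- key entry vanishing in the centralizer
  have hvanish : ∀ N : Matrix (Fin n) (Fin n) ℕ,
      Matrix.single a a 1 * N = N * Matrix.single a a 1 →
      ∀ i, i ≠ a → N i a = 0 := by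
    intro N hN i hia
    have h := congrFun (congrFun hN i) a
    rw [Matrix.mul_apply, Matrix.mul_apply] at h
    have hL : ∑ x, Matrix.single a a 1 i x * N x a = 0 := by
      apply Finset.sum_eq_zero
      intro x _
      rw [Matrix.single, Matrix.of_apply, if_neg (fun hh => hia hh.1.symm),
        zero_mul]
    have hR : ∑ x, N i x * Matrix.single a a 1 x a = N i a := by
      rw [Finset.sum_eq_single a]
      · rw [Matrix.single, Matrix.of_apply, if_pos ⟨rfl, rfl⟩, mul_one]
      · intro b _ hb
        rw [Matrix.single, Matrix.of_apply, if_neg (fun hh => hb hh.1.symm),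
          mul_zero]
      · intro hmem; exact absurd (Finset.mem_univ a) hmem
    rw [hL] at h
    rw [hR] at h
    exact h.symm
  -- the (a,a) entry is a ring hom on the centralizer
  have hmul : ∀ M N : C, ((M * N : C) : Matrix (Fin n) (Fin n) ℕ) a a
      = ((M : Matrix (Fin n) (Fin n) ℕ) a a) * ((N : Matrix (Fin n) (Fin n) ℕ) a a) := by
    intro M N
    have hNmem : ∀ g ∈ ({Matrix.single a a 1} : Set (Matrix (Fin n) (Fin n) ℕ)),
        g * (N : Matrix (Fin n) (Fin n) ℕ) = (N : Matrix (Fin n) (Fin n) ℕ) * g :=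
      (Subalgebra.mem_centralizer_iff (R := ℕ)).mp N.2
    have hNa := hvanish N (hNmem _ (Set.mem_singleton _))
    show ((M : Matrix (Fin n) (Fin n) ℕ) * (N : Matrix (Fin n) (Fin n) ℕ)) a a = _
    rw [Matrix.mul_apply, Finset.sum_eq_single a]
    · intro b _ hb
      rw [hNa b hb, mul_zero]
    · intro hmem; exact absurd (Finset.mem_univ a) hmem
  let ψ : C →+* ℕ :=
    { toFun := fun M => (M : Matrix (Fin n) (Fin n) ℕ) a a
      map_one' := by
        show ((1 : C) : Matrix (Fin n) (Fin n) ℕ) a a = 1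
        rw [Subalgebra.coe_one]; exact Matrix.one_apply_eq a
      map_mul' := hmul
      map_zero' := by
        show ((0 : C) : Matrix (Fin n) (Fin n) ℕ) a a = 0
        rw [Subalgebra.coe_zero]; rfl
      map_add' := by
        intro M N
        show ((M + N : C) : Matrix (Fin n) (Fin n) ℕ) a a = _
        rw [Subalgebra.coe_add]; rfl }
  let φ : C →ₐ[ℕ] ℕ := ψ.toNatAlgHom
  have hXmem : ∀ j, X j ∈ C := by
    intro j
    show X j ∈ Subalgebra.centralizer ℕ _
    rw [Subalgebra.mem_centralizer_iff]
    intro g hg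
    rw [Set.mem_singleton_iff] at hg
    rw [hg]
    exact (hcomm j).symm
  let Xc : Fin k → C := fun j => ⟨X j, hXmem j⟩
  have hval : (C.val.comp (FreeAlgebra.lift ℕ Xc)) = FreeAlgebra.lift ℕ X := by
    apply FreeAlgebra.hom_ext
    funext j
    simp [Xc]
  refine ⟨fun j => X j a a, ?_⟩
  have hφ : (φ.comp (FreeAlgebra.lift ℕ Xc)) = FreeAlgebra.lift ℕ (fun j => X j a a) := by
    apply FreeAlgebra.hom_ext
    funext j
    exact (congrArg φ (FreeAlgebra.lift_ι_apply Xc j)).trans (FreeAlgebra.lift_ι_apply (R := ℕ) (fun j => X j a a) j).symm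
  have hcalc : ∀ r : FreeAlgebra ℕ (Fin k),
      FreeAlgebra.lift ℕ (fun j => X j a a) r = (FreeAlgebra.lift ℕ X r) a a := by
    intro r
    rw [← hφ, ← hval]
    rfl
  rw [hcalc, hcalc, hpq]
end Backward

section Forward

def pM (σ : Equiv.Perm (Fin n)) : Matrix (Fin n) (Fin n) ℕ :=
  Matrix.of fun i j => if σ j = i then 1 else 0

lemma pM_mul (σ τ : Equiv.Perm (Fin n)) : pM σ * pM τ = pM (τ.trans σ) := by
  ext i j
  simp only [pM, Matrix.mul_apply, Matrix.of_apply, Equiv.trans_apply, ite_mul, one_mul,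
    zero_mul, mul_ite, mul_one, mul_zero]
  simp [Finset.sum_ite_eq, Finset.sum_ite_eq']
  exact if_congr Iff.rfl rfl rfl

lemma pM_refl : pM (Equiv.refl (Fin n)) = 1 := by
  ext i j
  simp [pM, Matrix.one_apply, eq_comm]

lemma pM_std_pM (σ : Equiv.Perm (Fin n)) (a : Fin n) :
    pM σ * Matrix.single a a 1 * pM σ
      = Matrix.single (σ a) (σ⁻¹ a) 1 := by
  ext i j
  simp only [pM, Matrix.mul_apply, Matrix.of_apply, Matrix.single, ite_mul, one_mul,
    zero_mul, mul_ite, mul_one, mul_zero, Finset.sum_ite_eq, Finset.sum_ite_eq',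
    Finset.mem_univ, if_true]
  rw [Finset.sum_congr rfl (fun x _ => by
    rw [show (if a = x ∧ a = σ j then (if σ x = i then (1:ℕ) else 0) else 0)
        = if a = x then (if a = σ j ∧ σ x = i then 1 else 0) else 0 from by
      split_ifs <;> tauto])]
  rw [Finset.sum_ite_eq Finset.univ a (fun x => if a = σ j ∧ σ x = i then (1:ℕ) else 0)]
  simp only [Finset.mem_univ, if_true]
  by_cases h1 : a = σ j
  · have h1' : σ⁻¹ a = j := by rw [h1]; simp
    by_cases h2 : σ a = i
    · rw [if_pos ⟨h1, h2⟩, if_pos ⟨h2, h1'⟩]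
    · rw [if_neg (fun hh => h2 hh.2), if_neg (fun hh => h2 hh.1)]
  · have h1' : σ⁻¹ a ≠ j := fun hh => h1 (by rw [← hh]; simp)
    rw [if_neg (fun hh => h1 hh.1), if_neg (fun hh => h1' hh.2)]

lemma sum_std : ∑ i : Fin n, Matrix.single i i (1 : ℕ) = 1 := by
  ext i j
  rw [Matrix.sum_apply]
  simp only [Matrix.single, Matrix.of_apply, Matrix.one_apply]
  rw [Finset.sum_congr rfl (fun x _ => by
    rw [show (if x = i ∧ x = j then (1:ℕ) else 0) = if x = i then (if x = j then 1 else 0) else 0 from by split_ifs <;> tauto])]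
  rw [Finset.sum_ite_eq' Finset.univ i (fun x => if x = j then (1:ℕ) else 0)]
  simp

end Forward

/-- The equation `p(x_1,…,x_k) = q(x_1,…,x_k)` (with `p, q` non-commutative polynomials
with natural coefficients) has a solution in `ℕ^k` if and only if the system
`Y + A_1·Y·A_1 + ⋯ + A_{n-1}·Y·A_{n-1} = I_n`, `A_1²·⋯·A_{n-1}² = I_n`,
`X_j·Y = Y·X_j` for all `j`, and `p(X_1,…,X_k) = q(X_1,…,X_k)` has a solution in
`M_n(ℕ)`. -/
theorem stmt13 (n k : ℕ) (hn : 1 ≤ n) (hk : 1 ≤ k)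
    (p q : FreeAlgebra ℕ (Fin k)) :
    (∃ x : Fin k → ℕ, FreeAlgebra.lift ℕ x p = FreeAlgebra.lift ℕ x q)
      ↔ (∃ (Y : Matrix (Fin n) (Fin n) ℕ)
            (A : Fin (n - 1) → Matrix (Fin n) (Fin n) ℕ)
            (X : Fin k → Matrix (Fin n) (Fin n) ℕ),
          Y + ∑ j : Fin (n - 1), A j * Y * A j = 1
          ∧ (List.ofFn fun j : Fin (n - 1) => (A j) ^ 2).prod = 1
          ∧ (∀ j : Fin k, X j * Y = Y * X j)
          ∧ FreeAlgebra.lift ℕ X p = FreeAlgebra.lift ℕ X q) := by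
  constructor
  · rintro ⟨x, hx⟩
    obtain ⟨m, rfl⟩ : ∃ m, n = m + 1 := ⟨n - 1, (Nat.succ_pred_eq_of_pos hn).symm⟩
    set a : Fin (m + 1) := 0 with ha
    refine ⟨Matrix.single a a 1,
      fun j : Fin (m + 1 - 1) => pM (Equiv.swap a (Fin.succ (Fin.cast (by omega) j))),
      fun j => algebraMap ℕ _ (x j), ?_, ?_, ?_, ?_⟩
    · -- partition of identity
      have key : ∀ j : Fin (m + 1 - 1),
          pM (Equiv.swap a (Fin.succ (Fin.cast (by omega : m + 1 - 1 = m) j)))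
            * Matrix.single a a 1
            * pM (Equiv.swap a (Fin.succ (Fin.cast (by omega) j)))
          = Matrix.single (Fin.succ (Fin.cast (by omega) j))
              (Fin.succ (Fin.cast (by omega) j)) 1 := by
        intro j
        rw [pM_std_pM, Equiv.swap_inv, Equiv.swap_apply_left]
      calc Matrix.single a a 1 + ∑ j : Fin (m + 1 - 1),
            pM (Equiv.swap a (Fin.succ (Fin.cast (by omega) j)))
              * Matrix.single a a 1
              * pM (Equiv.swap a (Fin.succ (Fin.cast (by omega) j)))
          = Matrix.single a a 1 + ∑ j : Fin (m + 1 - 1),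
            Matrix.single (Fin.succ (Fin.cast (by omega) j))
              (Fin.succ (Fin.cast (by omega) j)) 1 := by
            rw [Finset.sum_congr rfl (fun j _ => key j)]
        _ = ∑ i : Fin (m + 1), Matrix.single i i 1 := by
            rw [Fin.sum_univ_succ (f := fun i : Fin (m + 1) => Matrix.single i i (1 : ℕ))]
            rfl
        _ = 1 := sum_std
    · apply List.prod_eq_one
      intro M hM
      rw [List.mem_ofFn] at hM
      obtain ⟨j, rfl⟩ := hM
      show pM (Equiv.swap a (Fin.succ (Fin.cast (by omega) j))) ^ 2 = 1
      rw [pow_two, pM_mul, Equiv.swap_swap, pM_refl]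
    · intro j
      exact (Algebra.commutes (A := Matrix (Fin (m + 1)) (Fin (m + 1)) ℕ) (x j)
        (Matrix.single a a 1))
    · have hcomp : ((Algebra.ofId ℕ (Matrix (Fin (m + 1)) (Fin (m + 1)) ℕ)).comp
          (FreeAlgebra.lift ℕ x)) = FreeAlgebra.lift ℕ (fun j => algebraMap ℕ _ (x j)) := by
        apply FreeAlgebra.hom_ext
        funext j
        simp [Algebra.ofId]
      rw [← hcomp]
      simp only [AlgHom.comp_apply, hx]
  · rintro ⟨Y, A, X, hY, hA, hcomm, hpq⟩
    obtain ⟨a, hYs⟩ := Y_std hn hY hA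
    exact backward_dir hYs hcomm hpq
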